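/- Let p ∈ (1,∞), Λ > 0, M > 0 and μ ∈ (0,1]. There exist ϑ ∈ (0, π/2) and μ' > 0, depending only on p, Λ, M and μ, with the following property: whenever A ∈ ℂ^{d×d}, b, c ∈ ℂ^d and V ≥ 0 real satisfy |⟨Aξ,σ⟩| ≤ Λ|ξ||σ| for all ξ, σ ∈ ℂ^d, |b − c| ≤ M√V, and Γ_p^{(A,b,c,V)}(ξ) ≥ μ(|ξ|² + V) for all ξ ∈ ℂ^d, then for every φ ∈ [−ϑ, ϑ] one has Γ_p^{(e^{iφ}A, e^{iφ}b, e^{iφ}c, (cos φ)V)}(ξ) ≥ μ'(|ξ|² + (cos φ)V) for all ξ ∈ ℂ^d. -/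

import Mathlib

open scoped ComplexConjugate

/-- The ℝ-linear operator `𝒥_p ξ = (p/2)(ξ + (1 − 2/p)·conj ξ)` on `ℂ^d`. -/
noncomputable def Jmap (p : ℝ) {d : ℕ} (ξ : EuclideanSpace ℂ (Fin d)) :
    EuclideanSpace ℂ (Fin d) :=
  WithLp.toLp 2 (fun i => (p / 2 : ℂ) * (ξ i + ((1 - 2 / p : ℝ) : ℂ) * conj (ξ i)))

/-- The Hermitian inner product `⟨x,y⟩ = ∑ x i * conj (y i)`, linear in the first variable. -/
noncomputable def hip {d : ℕ} (x y : EuclideanSpace ℂ (Fin d)) : ℂ :=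
  @inner ℂ _ _ y x

/-- A matrix acting on `ℂ^d`. -/
noncomputable def mulVecE {d : ℕ} (A : Matrix (Fin d) (Fin d) ℂ)
    (ξ : EuclideanSpace ℂ (Fin d)) : EuclideanSpace ℂ (Fin d) :=
  WithLp.toLp 2 (fun i => A.mulVec (fun j => ξ j) i)

/-- `Γ_p^{(A,b,c,V)}(ξ) = Re⟨Aξ, 𝒥_p ξ⟩ + Re⟨b + 𝒥_p c, ξ⟩ + V`. -/
noncomputable def Gamma (p : ℝ) {d : ℕ} (A : Matrix (Fin d) (Fin d) ℂ)
    (b c : EuclideanSpace ℂ (Fin d)) (V : ℝ) (ξ : EuclideanSpace ℂ (Fin d)) : ℝ :=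
  (hip (mulVecE A ξ) (Jmap p ξ)).re + (hip (b + Jmap p c) ξ).re + V

/-! ### Auxiliary material -/

/-- Componentwise conjugation. -/
noncomputable def cvec {d : ℕ} (x : EuclideanSpace ℂ (Fin d)) : EuclideanSpace ℂ (Fin d) :=
  WithLp.toLp 2 (fun i => conj (x i))

lemma norm_cvec {d : ℕ} (x : EuclideanSpace ℂ (Fin d)) : ‖cvec x‖ = ‖x‖ := by
  simp [cvec, EuclideanSpace.norm_eq]

lemma hip_add_left {d : ℕ} (x x' y : EuclideanSpace ℂ (Fin d)) :
    hip (x + x') y = hip x y + hip x' y := inner_add_right y x x'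

lemma hip_smul_left {d : ℕ} (a : ℂ) (x y : EuclideanSpace ℂ (Fin d)) :
    hip (a • x) y = a * hip x y := inner_smul_right y x a

lemma hip_smul_right_real {d : ℕ} (t : ℝ) (x y : EuclideanSpace ℂ (Fin d)) :
    hip x ((t : ℂ) • y) = (t : ℂ) * hip x y := by
  unfold hip; rw [inner_smul_left]; simp

lemma abs_hip_le {d : ℕ} (x y : EuclideanSpace ℂ (Fin d)) :
    ‖hip x y‖ ≤ ‖x‖ * ‖y‖ := by
  calc ‖hip x y‖ ≤ ‖y‖ * ‖x‖ := norm_inner_le_norm y x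
  _ = ‖x‖ * ‖y‖ := mul_comm _ _

lemma hip_self_re {d : ℕ} (x : EuclideanSpace ℂ (Fin d)) : (hip x x).re = ‖x‖ ^ 2 := by
  have h := inner_self_eq_norm_sq (𝕜 := ℂ) x
  simpa [hip, RCLike.re_to_complex] using h

lemma mulVecE_smul {d : ℕ} (A : Matrix (Fin d) (Fin d) ℂ) (a : ℂ)
    (ξ : EuclideanSpace ℂ (Fin d)) : mulVecE (a • A) ξ = a • mulVecE A ξ := by
  ext i
  show ((a • A).mulVec fun j => ξ j) i = a * (A.mulVec fun j => ξ j) i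
  rw [Matrix.smul_mulVec]; rfl

lemma mulVecE_smul_vec {d : ℕ} (A : Matrix (Fin d) (Fin d) ℂ) (a : ℂ)
    (ξ : EuclideanSpace ℂ (Fin d)) : mulVecE A (a • ξ) = a • mulVecE A ξ := by
  ext i
  show (A.mulVec fun j => (a • ξ) j) i = a * (A.mulVec fun j => ξ j) i
  have : (fun j => (a • ξ) j) = a • fun j => ξ j := rfl
  rw [this, Matrix.mulVec_smul]; rfl

lemma Jmap_eq {d : ℕ} (p : ℝ) (hp : p ≠ 0) (x : EuclideanSpace ℂ (Fin d)) :
    Jmap p x = ((p / 2 : ℝ) : ℂ) • x + (((p - 2) / 2 : ℝ) : ℂ) • cvec x := by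
  ext i
  show (p / 2 : ℂ) * (x i + ((1 - 2 / p : ℝ) : ℂ) * conj (x i))
      = ((p / 2 : ℝ) : ℂ) * x i + (((p - 2) / 2 : ℝ) : ℂ) * conj (x i)
  have hpc : (p : ℂ) ≠ 0 := by exact_mod_cast hp
  push_cast
  field_simp

lemma norm_Jmap_le {d : ℕ} (p : ℝ) (hp : p ≠ 0) (hp0 : 0 < p) (x : EuclideanSpace ℂ (Fin d)) :
    ‖Jmap p x‖ ≤ (p / 2 + |(p - 2) / 2|) * ‖x‖ := by
  rw [Jmap_eq p hp]
  calc ‖((p / 2 : ℝ) : ℂ) • x + (((p - 2) / 2 : ℝ) : ℂ) • cvec x‖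
      ≤ ‖((p / 2 : ℝ) : ℂ) • x‖ + ‖(((p - 2) / 2 : ℝ) : ℂ) • cvec x‖ := norm_add_le _ _
  _ = |p / 2| * ‖x‖ + |(p - 2) / 2| * ‖x‖ := by
      rw [norm_smul, norm_smul, norm_cvec, Complex.norm_real, Complex.norm_real,
        Real.norm_eq_abs, Real.norm_eq_abs]
  _ = (p / 2 + |(p - 2) / 2|) * ‖x‖ := by
      rw [abs_of_pos (by linarith)]; ring

lemma Jmap_smul_real {d : ℕ} (p t : ℝ) (x : EuclideanSpace ℂ (Fin d)) :
    Jmap p ((t : ℂ) • x) = (t : ℂ) • Jmap p x := by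
  ext i
  show (p / 2 : ℂ) * ((t : ℂ) * x i + ((1 - 2 / p : ℝ) : ℂ) * conj ((t : ℂ) * x i))
      = (t : ℂ) * ((p / 2 : ℂ) * (x i + ((1 - 2 / p : ℝ) : ℂ) * conj (x i)))
  rw [map_mul, Complex.conj_ofReal]
  ring

lemma Jmap_smul_exp {d : ℕ} (p : ℝ) (hp : p ≠ 0) (e : ℂ) (c : EuclideanSpace ℂ (Fin d)) :
    Jmap p (e • c) = e • Jmap p c
      + ((((p - 2) / 2 : ℝ) : ℂ) * (conj e - e)) • cvec c := by
  have h1 := Jmap_eq p hp (e • c)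
  have h2 := Jmap_eq p hp c
  rw [h1, h2]
  ext i
  show ((p / 2 : ℝ) : ℂ) * (e * c i) + (((p - 2) / 2 : ℝ) : ℂ) * conj (e * c i)
      = e * (((p / 2 : ℝ) : ℂ) * c i + (((p - 2) / 2 : ℝ) : ℂ) * conj (c i))
        + ((((p - 2) / 2 : ℝ) : ℂ) * (conj e - e)) * conj (c i)
  rw [map_mul]
  ring


/-- Final scalar estimate. -/
lemma final_arith (μ cφ s qre qim h x v ΛCp C₁ D : ℝ)
    (hμ0 : 0 < μ) (hΛCp : 0 < ΛCp) (hC₁ : 0 < C₁) (hDdef : D = ΛCp + C₁)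
    (hx0 : 0 ≤ x) (hv0 : 0 ≤ v)
    (hcos : 1 / 2 ≤ cφ) (hcos1 : cφ ≤ 1)
    (hsin : |s| ≤ μ / (4 * D))
    (hΓ0 : μ * (x ^ 2 + v ^ 2) ≤ qre + v ^ 2)
    (hE : |(-(s * qim)) + h| ≤ |s| * (ΛCp * x ^ 2 + C₁ * v * x)) :
    μ / 4 * (x ^ 2 + cφ * v ^ 2) ≤ cφ * qre - s * qim + h + cφ * v ^ 2 := by
  have hD : 0 < D := by rw [hDdef]; positivity
  have hs0 : 0 ≤ |s| := abs_nonneg s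
  have hcφ0 : (0:ℝ) ≤ cφ := by linarith
  have hvx : v * x ≤ (x ^ 2 + v ^ 2) / 2 := by nlinarith [sq_nonneg (x - v)]
  have hcore : μ / 2 * x ^ 2 + μ * cφ * v ^ 2 ≤ cφ * (qre + v ^ 2) := by
    nlinarith [mul_le_mul_of_nonneg_left hΓ0 hcφ0,
      mul_nonneg (mul_nonneg hμ0.le (sq_nonneg x)) (by linarith : (0:ℝ) ≤ cφ - 1/2)]
  have hsD : |s| * D ≤ μ / 4 := by
    have := mul_le_mul_of_nonneg_right hsin hD.le
    calc |s| * D ≤ μ / (4 * D) * D := this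
    _ = μ / 4 := by field_simp
  have k1 : |s| * (ΛCp * x ^ 2 + C₁ * v * x) ≤ |s| * (D * x ^ 2 + C₁ / 2 * v ^ 2) := by
    apply mul_le_mul_of_nonneg_left ?_ hs0
    rw [hDdef]
    nlinarith [mul_le_mul_of_nonneg_left hvx hC₁.le]
  have k3 : |s| * (D * x ^ 2 + C₁ / 2 * v ^ 2) ≤ μ / 4 * x ^ 2 + μ / 4 * v ^ 2 := by
    nlinarith [mul_le_mul_of_nonneg_right hsD (sq_nonneg x),
      mul_le_mul_of_nonneg_right hsD (sq_nonneg v),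
      mul_nonneg (mul_nonneg hs0 (sq_nonneg v)) (by linarith : (0:ℝ) ≤ D - C₁ / 2)]
  have k4 : μ / 4 * v ^ 2 ≤ μ / 2 * cφ * v ^ 2 := by
    nlinarith [mul_nonneg (mul_nonneg hμ0.le (sq_nonneg v)) (by linarith : (0:ℝ) ≤ cφ - 1/2)]
  have hE2 : -(μ / 4 * x ^ 2 + μ / 2 * cφ * v ^ 2) ≤ (-(s * qim)) + h := by
    have hna := neg_abs_le ((-(s * qim)) + h)
    linarith
  have hcv : 0 ≤ cφ * v ^ 2 := mul_nonneg hcφ0 (sq_nonneg v)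
  linarith [hcore, hE2, hcv, mul_nonneg hμ0.le hcv]

set_option maxHeartbeats 1000000 in
theorem stmt6 (p Λ M μ : ℝ) (hp : 1 < p)
    (hΛ : 0 < Λ) (hM : 0 < M) (hμ0 : 0 < μ) (hμ1 : μ ≤ 1) :
    ∃ ϑ μ' : ℝ, 0 < ϑ ∧ ϑ < Real.pi / 2 ∧ 0 < μ' ∧
      ∀ (d : ℕ), 1 ≤ d →
        ∀ (A : Matrix (Fin d) (Fin d) ℂ) (b c : EuclideanSpace ℂ (Fin d)) (V : ℝ),
          0 ≤ V →
          (∀ ξ σ : EuclideanSpace ℂ (Fin d),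
            ‖hip (mulVecE A ξ) σ‖ ≤ Λ * ‖ξ‖ * ‖σ‖) →
          ‖b - c‖ ≤ M * Real.sqrt V →
          (∀ ξ : EuclideanSpace ℂ (Fin d), μ * (‖ξ‖ ^ 2 + V) ≤ Gamma p A b c V ξ) →
          ∀ φ : ℝ, -ϑ ≤ φ → φ ≤ ϑ →
            ∀ ξ : EuclideanSpace ℂ (Fin d),
              μ' * (‖ξ‖ ^ 2 + Real.cos φ * V) ≤
                Gamma p (Complex.exp (φ * Complex.I) • A)
                  (Complex.exp (φ * Complex.I) • b)
                  (Complex.exp (φ * Complex.I) • c)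
                  (Real.cos φ * V) ξ := by
  have hp0 : (0:ℝ) < p := by linarith
  have hpne : p ≠ 0 := ne_of_gt hp0
  set Cp : ℝ := p / 2 + |(p - 2) / 2| with hCp_def
  have hCp : 0 < Cp := by positivity
  set α : ℝ := Real.sqrt (Λ * Cp) with hα_def
  have hα : 0 < α := Real.sqrt_pos.mpr (by positivity)
  have hα2 : α ^ 2 = Λ * Cp := Real.sq_sqrt (by positivity)
  set C₁ : ℝ := 2 * α + |p - 2| * (2 * α + M) + 1 with hC₁_def
  have hC₁ : 0 < C₁ := by positivity
  set D : ℝ := Λ * Cp + C₁ with hD_def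
  have hD : 0 < D := by positivity
  have hπ : (0:ℝ) < Real.pi := Real.pi_pos
  clear_value Cp α C₁ D
  refine ⟨min (Real.pi / 4) (μ / (4 * D)), μ / 4, ?_, ?_, by positivity, ?_⟩
  · exact lt_min (by positivity) (div_pos hμ0 (by linarith))
  · calc min (Real.pi / 4) (μ / (4 * D)) ≤ Real.pi / 4 := min_le_left _ _
    _ < Real.pi / 2 := by linarith
  intro d _ A b c V hV hA hbc hΓ φ hφ1 hφ2 ξ
  -- basic facts about φ
  have habsφ : |φ| ≤ min (Real.pi / 4) (μ / (4 * D)) := abs_le.mpr ⟨hφ1, hφ2⟩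
  have hsin : |Real.sin φ| ≤ μ / (4 * D) :=
    le_trans (Real.abs_sin_le_abs) (le_trans habsφ (min_le_right _ _))
  have hcos : (1:ℝ)/2 ≤ Real.cos φ := by
    have habs1 : |φ| ≤ Real.pi / 4 := le_trans habsφ (min_le_left _ _)
    have h1 : Real.cos (Real.pi / 4) ≤ Real.cos |φ| :=
      Real.cos_le_cos_of_nonneg_of_le_pi (abs_nonneg φ) (by linarith) habs1
    rw [Real.cos_abs, Real.cos_pi_div_four] at h1
    nlinarith [Real.sq_sqrt (show (0:ℝ) ≤ 2 by norm_num), Real.sqrt_nonneg 2]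
  have hcos1 : Real.cos φ ≤ 1 := Real.cos_le_one φ
  set e : ℂ := Complex.exp (φ * Complex.I) with he_def
  have he_re : e.re = Real.cos φ := by
    rw [he_def, Complex.exp_mul_I]
    simp [← Complex.ofReal_cos, ← Complex.ofReal_sin]
  have he_im : e.im = Real.sin φ := by
    rw [he_def, Complex.exp_mul_I]
    simp [← Complex.ofReal_cos, ← Complex.ofReal_sin]
  -- abbreviations
  set L : EuclideanSpace ℂ (Fin d) := b + Jmap p c with hL_def
  set qA : ℂ := hip (mulVecE A ξ) (Jmap p ξ) with hqA_def
  set qL : ℂ := hip L ξ with hqL_def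
  set q : ℂ := qA + qL with hq_def
  have hGamma0 : ∀ ζ : EuclideanSpace ℂ (Fin d),
      Gamma p A b c V ζ = (hip (mulVecE A ζ) (Jmap p ζ)).re + (hip L ζ).re + V := fun ζ => rfl
  -- Step A : ‖L‖ ≤ 2 α √V
  have hJnorm : ∀ ζ : EuclideanSpace ℂ (Fin d), ‖Jmap p ζ‖ ≤ Cp * ‖ζ‖ :=
    fun ζ => by rw [hCp_def]; exact norm_Jmap_le p hpne hp0 ζ
  have hqA_bound : ∀ ζ : EuclideanSpace ℂ (Fin d),
      ‖hip (mulVecE A ζ) (Jmap p ζ)‖ ≤ Λ * Cp * ‖ζ‖ ^ 2 := by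
    intro ζ
    calc ‖hip (mulVecE A ζ) (Jmap p ζ)‖ ≤ Λ * ‖ζ‖ * ‖Jmap p ζ‖ := hA ζ _
    _ ≤ Λ * ‖ζ‖ * (Cp * ‖ζ‖) := by
        apply mul_le_mul_of_nonneg_left (hJnorm ζ) (by positivity)
    _ = Λ * Cp * ‖ζ‖ ^ 2 := by ring
  set v : ℝ := Real.sqrt V with hv_def
  have hv0 : 0 ≤ v := Real.sqrt_nonneg V
  have hv2 : v ^ 2 = V := Real.sq_sqrt hV
  clear_value v
  have hLnorm : ‖L‖ ≤ 2 * α * v := by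
    -- use the coercivity hypothesis at ζ = (−t) • L with t = 1/(2ΛCp)
    set t : ℝ := 1 / (2 * (Λ * Cp)) with ht_def
    have ht : 0 < t := by positivity
    clear_value t
    have key := hΓ (((-t : ℝ) : ℂ) • L)
    rw [hGamma0] at key
    rw [mulVecE_smul_vec, Jmap_smul_real] at key
    rw [hip_smul_left, hip_smul_right_real, hip_smul_right_real, ← mul_assoc] at key
    have hrw : ((((-t:ℝ):ℂ)) * ((-t:ℝ):ℂ) * hip (mulVecE A L) (Jmap p L)).re
        = t ^ 2 * (hip (mulVecE A L) (Jmap p L)).re := by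
      have : (((-t:ℝ):ℂ)) * ((-t:ℝ):ℂ) = ((t^2 : ℝ) : ℂ) := by push_cast; ring
      rw [this, Complex.re_ofReal_mul]
    rw [hrw] at key
    have hrw2 : (((-t:ℝ):ℂ) * hip L L).re = -t * ‖L‖ ^ 2 := by
      rw [Complex.re_ofReal_mul, hip_self_re]
    rw [hrw2] at key
    have hnorm_smul : ‖((-t : ℝ) : ℂ) • L‖ = t * ‖L‖ := by
      rw [norm_smul]
      simp [abs_of_pos ht]
    rw [hnorm_smul] at key
    have hreA : (hip (mulVecE A L) (Jmap p L)).re ≤ Λ * Cp * ‖L‖ ^ 2 :=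
      le_trans (Complex.re_le_norm _) (hqA_bound L)
    have hμnn : 0 ≤ μ * ((t * ‖L‖) ^ 2 + V) := by positivity
    -- so t‖L‖² ≤ t² Λ Cp ‖L‖² + V
    have hkey2 : t * ‖L‖ ^ 2 ≤ t ^ 2 * (Λ * Cp) * ‖L‖ ^ 2 + V := by nlinarith
    have hL2 : ‖L‖ ^ 2 ≤ 4 * (Λ * Cp) * V := by
      have ht_eq : t * (2 * (Λ * Cp)) = 1 := by
        rw [ht_def]; field_simp
      have e1 : t ^ 2 * (Λ * Cp) * ‖L‖ ^ 2 = 1 / 2 * (t * ‖L‖ ^ 2) := by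
        rw [ht_def]; field_simp
      have e2 : t * ‖L‖ ^ 2 ≤ 2 * V := by rw [e1] at hkey2; linarith
      have e3 := mul_le_mul_of_nonneg_left e2 (by positivity : (0:ℝ) ≤ 2 * (Λ * Cp))
      have e4 : 2 * (Λ * Cp) * (t * ‖L‖ ^ 2) = ‖L‖ ^ 2 := by
        rw [ht_def]; field_simp
      linarith
    have : ‖L‖ ^ 2 ≤ (2 * α * v) ^ 2 := by nlinarith
    have h2αv : 0 ≤ 2 * α * v := by positivity
    nlinarith [norm_nonneg L]
  -- Step B : ‖c‖ ≤ (2α + M) v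
  have hcnorm : ‖c‖ ≤ (2 * α + M) * v := by
    have h1 : ‖c‖ ≤ ‖c + Jmap p c‖ := by
      have heq : c + Jmap p c = ((1 + p / 2 : ℝ) : ℂ) • c + (((p - 2) / 2 : ℝ) : ℂ) • cvec c := by
        rw [Jmap_eq p hpne]
        ext i
        show c i + (((p / 2 : ℝ) : ℂ) * c i + (((p - 2) / 2 : ℝ) : ℂ) * conj (c i))
            = ((1 + p / 2 : ℝ) : ℂ) * c i + (((p - 2) / 2 : ℝ) : ℂ) * conj (c i)
        push_cast; ring
      rw [heq]
      have h2 : ‖((1 + p / 2 : ℝ) : ℂ) • c‖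
          ≤ ‖((1 + p / 2 : ℝ) : ℂ) • c + (((p - 2) / 2 : ℝ) : ℂ) • cvec c‖
            + ‖(((p - 2) / 2 : ℝ) : ℂ) • cvec c‖ := by
        calc ‖((1 + p / 2 : ℝ) : ℂ) • c‖
            = ‖(((1 + p / 2 : ℝ) : ℂ) • c + (((p - 2) / 2 : ℝ) : ℂ) • cvec c)
              - (((p - 2) / 2 : ℝ) : ℂ) • cvec c‖ := by rw [add_sub_cancel_right]
        _ ≤ _ := norm_sub_le _ _
      have h3 : ‖((1 + p / 2 : ℝ) : ℂ) • c‖ = (1 + p / 2) * ‖c‖ := by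
        rw [norm_smul, Complex.norm_real, Real.norm_eq_abs,
          abs_of_pos (by linarith : (0:ℝ) < 1 + p / 2)]
      have h4 : ‖(((p - 2) / 2 : ℝ) : ℂ) • cvec c‖ = |(p - 2) / 2| * ‖c‖ := by
        rw [norm_smul, norm_cvec, Complex.norm_real, Real.norm_eq_abs]
      have h5 : |(p - 2) / 2| ≤ p / 2 := by
        have habs : |p - 2| ≤ p := abs_le.mpr ⟨by linarith, by linarith⟩
        rw [abs_div, abs_two]
        linarith
      have h7 := mul_le_mul_of_nonneg_right h5 (norm_nonneg c)
      linarith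
    have h6 : c + Jmap p c = L - (b - c) := by rw [hL_def]; abel
    calc ‖c‖ ≤ ‖c + Jmap p c‖ := h1
    _ = ‖L - (b - c)‖ := by rw [h6]
    _ ≤ ‖L‖ + ‖b - c‖ := norm_sub_le _ _
    _ ≤ 2 * α * v + M * v := by
        exact add_le_add hLnorm hbc
    _ = (2 * α + M) * v := by ring
  -- rotated Gamma identity
  have hΔ_def : Jmap p (e • c) = e • Jmap p c
      + ((((p - 2) / 2 : ℝ) : ℂ) * (conj e - e)) • cvec c := Jmap_smul_exp p hpne e c
  set Δ : EuclideanSpace ℂ (Fin d) := ((((p - 2) / 2 : ℝ) : ℂ) * (conj e - e)) • cvec c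
    with hΔdef
  have hGammaφ : Gamma p (e • A) (e • b) (e • c) (Real.cos φ * V) ξ
      = (e * q).re + (hip Δ ξ).re + Real.cos φ * V := by
    show (hip (mulVecE (e • A) ξ) (Jmap p ξ)).re + (hip (e • b + Jmap p (e • c)) ξ).re
        + Real.cos φ * V = _
    rw [mulVecE_smul, hip_smul_left]
    have : e • b + Jmap p (e • c) = e • (b + Jmap p c) + Δ := by
      rw [hΔ_def, hΔdef, smul_add]; abel
    rw [this, hip_add_left, hip_smul_left]
    rw [hq_def, hqA_def, hqL_def, hL_def]
    rw [mul_add, Complex.add_re, Complex.add_re]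
    ring
  -- bound the error terms
  have hq_abs : ‖q‖ ≤ Λ * Cp * ‖ξ‖ ^ 2 + ‖L‖ * ‖ξ‖ := by
    calc ‖q‖ ≤ ‖qA‖ + ‖qL‖ := norm_add_le _ _
    _ ≤ Λ * Cp * ‖ξ‖ ^ 2 + ‖L‖ * ‖ξ‖ := add_le_add (hqA_bound ξ) (abs_hip_le L ξ)
  have hΔnorm : ‖Δ‖ ≤ |p - 2| * |Real.sin φ| * ‖c‖ := by
    rw [hΔdef, norm_smul, norm_cvec]
    have habs : ‖(((p - 2) / 2 : ℝ) : ℂ) * (conj e - e)‖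
        = |(p - 2) / 2| * ‖conj e - e‖ := by
      rw [norm_mul, Complex.norm_real, Real.norm_eq_abs]
    rw [habs]
    have hconj : conj e - e = ((-2 * Real.sin φ : ℝ) : ℂ) * Complex.I := by
      apply Complex.ext
      · rw [Complex.sub_re, Complex.conj_re, Complex.mul_I_re, Complex.ofReal_im]; ring
      · rw [Complex.sub_im, Complex.conj_im, Complex.mul_I_im, Complex.ofReal_re, he_im]; ring
    rw [hconj]
    have : ‖((-2 * Real.sin φ : ℝ) : ℂ) * Complex.I‖ = 2 * |Real.sin φ| := by
      rw [norm_mul, Complex.norm_I, Complex.norm_real, Real.norm_eq_abs]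
      rw [abs_mul]
      norm_num
    rw [this]
    have : |(p - 2) / 2| * (2 * |Real.sin φ|) = |p - 2| * |Real.sin φ| := by
      rw [abs_div]
      norm_num
      ring
    rw [this]
  have hΔhip : |(hip Δ ξ).re| ≤ |p - 2| * |Real.sin φ| * ‖c‖ * ‖ξ‖ := by
    calc |(hip Δ ξ).re| ≤ ‖hip Δ ξ‖ := Complex.abs_re_le_norm _
    _ ≤ ‖Δ‖ * ‖ξ‖ := abs_hip_le Δ ξ
    _ ≤ |p - 2| * |Real.sin φ| * ‖c‖ * ‖ξ‖ :=
        mul_le_mul_of_nonneg_right hΔnorm (norm_nonneg ξ)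
  -- the unrotated coercivity at ξ
  have hΓ0ξ : μ * (‖ξ‖ ^ 2 + V) ≤ q.re + V := by
    have := hΓ ξ
    rw [hGamma0] at this
    rw [hq_def, Complex.add_re]
    rw [hqA_def, hqL_def]
    linarith
  -- final arithmetic
  rw [hGammaφ]
  clear_value e L qA qL q Δ
  have hmul : (e * q).re = Real.cos φ * q.re - Real.sin φ * q.im := by
    rw [Complex.mul_re, he_re, he_im]
  rw [hmul]
  set x : ℝ := ‖ξ‖ with hx_def
  have hx0 : 0 ≤ x := norm_nonneg ξ
  clear_value x
  have hqim : |q.im| ≤ Λ * Cp * x ^ 2 + 2 * α * v * x := by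
    calc |q.im| ≤ ‖q‖ := Complex.abs_im_le_norm q
    _ ≤ Λ * Cp * x ^ 2 + ‖L‖ * x := hq_abs
    _ ≤ Λ * Cp * x ^ 2 + 2 * α * v * x :=
        add_le_add le_rfl (mul_le_mul_of_nonneg_right hLnorm hx0)
  have hΔ2 : |(hip Δ ξ).re| ≤ |p - 2| * |Real.sin φ| * ((2 * α + M) * v) * x := by
    calc |(hip Δ ξ).re| ≤ |p - 2| * |Real.sin φ| * ‖c‖ * x := hΔhip
    _ ≤ |p - 2| * |Real.sin φ| * ((2 * α + M) * v) * x := by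
        apply mul_le_mul_of_nonneg_right ?_ hx0
        apply mul_le_mul_of_nonneg_left hcnorm (by positivity)
  -- error estimate: |E| ≤ |sinφ| * (ΛCp x² + C₁ v x) 
  have hE : |(-(Real.sin φ * q.im)) + (hip Δ ξ).re|
      ≤ |Real.sin φ| * (Λ * Cp * x ^ 2 + C₁ * v * x) := by
    calc |(-(Real.sin φ * q.im)) + (hip Δ ξ).re|
        ≤ |(-(Real.sin φ * q.im))| + |(hip Δ ξ).re| := abs_add_le _ _
    _ = |Real.sin φ| * |q.im| + |(hip Δ ξ).re| := by rw [abs_neg, abs_mul]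
    _ ≤ |Real.sin φ| * (Λ * Cp * x ^ 2 + 2 * α * v * x)
        + |p - 2| * |Real.sin φ| * ((2 * α + M) * v) * x := by
        apply add_le_add ?_ hΔ2
        exact mul_le_mul_of_nonneg_left hqim (abs_nonneg _)
    _ ≤ |Real.sin φ| * (Λ * Cp * x ^ 2 + C₁ * v * x) := by
        have hkey : |Real.sin φ| * (Λ * Cp * x ^ 2 + 2 * α * v * x)
            + |p - 2| * |Real.sin φ| * ((2 * α + M) * v) * x
            + |Real.sin φ| * (v * x)
            = |Real.sin φ| * (Λ * Cp * x ^ 2 + C₁ * v * x) := by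
          rw [hC₁_def]; ring
        have hnn : 0 ≤ |Real.sin φ| * (v * x) :=
          mul_nonneg (abs_nonneg _) (mul_nonneg hv0 hx0)
        linarith
  -- put things together
  rw [← hv2] at hΓ0ξ ⊢
  exact final_arith μ (Real.cos φ) (Real.sin φ) q.re q.im ((hip Δ ξ).re) x v (Λ * Cp) C₁ D
    hμ0 (by positivity) hC₁ hD_def hx0 hv0 hcos hcos1 hsin hΓ0ξ hE
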